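/- For all m ≥ 1: ν₂(C_{5,m}) = 14 + ν₂((m+2)/4) if m ≡ 2 (mod 4); 13 + ν₂((m+1)/4) if m ≡ 3 (mod 4); 13 + ν₂((m+3)/4) if m ≡ 1 (mod 4); 16 + ν₂(m/8) if m ≡ 0 (mod 8); and 16 + ν₂((m+4)/8) if m ≡ 4 (mod 8). -/

import Mathlib

open Finset

/-- `ν₂(C_{5,m}) = 5 + Σ_{j=-4}^{5} ν₂(2m+3+j)`, i.e. `C_{5,m} = A_{5,2m+3}`;
the terms run over `2m-1, 2m, ..., 2m+8`. -/
def nuC5 (m : ℕ) : ℕ :=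
  5 + ∑ i ∈ Finset.range 10, padicValNat 2 (2 * m - 1 + i)

lemma v2_odd (n : ℕ) : padicValNat 2 (2*n+1) = 0 :=
  padicValNat.eq_zero_of_not_dvd (by omega)

lemma v2_pm (k n : ℕ) : padicValNat 2 (2^k * (2*n+1)) = k := by
  rw [padicValNat.mul (by positivity) (by omega), padicValNat.prime_pow, v2_odd]; ring

lemma v2_pk (k q : ℕ) : padicValNat 2 (2^k * (q+1)) = k + padicValNat 2 (q+1) := by
  rw [padicValNat.mul (by positivity) (by omega), padicValNat.prime_pow]

lemma v2_two (n : ℕ) : padicValNat 2 (2*(2*n+1)) = 1 := by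
  have := v2_pm 1 n; norm_num at this ⊢

lemma v2_four (n : ℕ) : padicValNat 2 (4*(2*n+1)) = 2 := by
  have := v2_pm 2 n; norm_num at this ⊢; omega

lemma v2_eight (n : ℕ) : padicValNat 2 (8*(2*n+1)) = 3 := by
  have := v2_pm 3 n; norm_num at this ⊢; omega

lemma v2_e8 (q : ℕ) : padicValNat 2 (8*(q+1)) = 3 + padicValNat 2 (q+1) := by
  have := v2_pk 3 q; norm_num at this ⊢; omega

lemma v2_e16 (q : ℕ) : padicValNat 2 (16*(q+1)) = 4 + padicValNat 2 (q+1) := by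
  have := v2_pk 4 q; norm_num at this ⊢; omega

lemma sum10 (n : ℕ) : (∑ i ∈ Finset.range 10, padicValNat 2 (n + i)) =
    padicValNat 2 (n+0) + padicValNat 2 (n+1) + padicValNat 2 (n+2) + padicValNat 2 (n+3)
    + padicValNat 2 (n+4) + padicValNat 2 (n+5) + padicValNat 2 (n+6)
    + padicValNat 2 (n+7) + padicValNat 2 (n+8) + padicValNat 2 (n+9) := by
  simp [Finset.sum_range_succ]

theorem nuC5_formula (m : ℕ) (hm : 1 ≤ m) :
    (m % 4 = 2 → nuC5 m = 14 + padicValNat 2 ((m + 2) / 4)) ∧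
    (m % 4 = 3 → nuC5 m = 13 + padicValNat 2 ((m + 1) / 4)) ∧
    (m % 4 = 1 → nuC5 m = 13 + padicValNat 2 ((m + 3) / 4)) ∧
    (m % 8 = 0 → nuC5 m = 16 + padicValNat 2 (m / 8)) ∧
    (m % 8 = 4 → nuC5 m = 16 + padicValNat 2 ((m + 4) / 8)) := by
  refine ⟨?_, ?_, ?_, ?_, ?_⟩
  · intro hmod
    obtain ⟨q, hq⟩ : ∃ q, m = 4*q+2 := ⟨m / 4, by omega⟩
    have h0 : padicValNat 2 (2 * m - 1 + 0) = padicValNat 2 (2*(4*q+1)+1) := by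
      rw [show 2 * m - 1 + 0 = 2*(4*q+1)+1 by omega]
    have h1 : padicValNat 2 (2 * m - 1 + 1) = padicValNat 2 (4*(2*(q)+1)) := by
      rw [show 2 * m - 1 + 1 = 4*(2*(q)+1) by omega]
    have h2 : padicValNat 2 (2 * m - 1 + 2) = padicValNat 2 (2*(4*q+2)+1) := by
      rw [show 2 * m - 1 + 2 = 2*(4*q+2)+1 by omega]
    have h3 : padicValNat 2 (2 * m - 1 + 3) = padicValNat 2 (2*(2*(2*q+1)+1)) := by
      rw [show 2 * m - 1 + 3 = 2*(2*(2*q+1)+1) by omega]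
    have h4 : padicValNat 2 (2 * m - 1 + 4) = padicValNat 2 (2*(4*q+3)+1) := by
      rw [show 2 * m - 1 + 4 = 2*(4*q+3)+1 by omega]
    have h5 : padicValNat 2 (2 * m - 1 + 5) = padicValNat 2 (8*(q+1)) := by
      rw [show 2 * m - 1 + 5 = 8*(q+1) by omega]
    have h6 : padicValNat 2 (2 * m - 1 + 6) = padicValNat 2 (2*(4*q+4)+1) := by
      rw [show 2 * m - 1 + 6 = 2*(4*q+4)+1 by omega]
    have h7 : padicValNat 2 (2 * m - 1 + 7) = padicValNat 2 (2*(2*(2*q+2)+1)) := by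
      rw [show 2 * m - 1 + 7 = 2*(2*(2*q+2)+1) by omega]
    have h8 : padicValNat 2 (2 * m - 1 + 8) = padicValNat 2 (2*(4*q+5)+1) := by
      rw [show 2 * m - 1 + 8 = 2*(4*q+5)+1 by omega]
    have h9 : padicValNat 2 (2 * m - 1 + 9) = padicValNat 2 (4*(2*(q+1)+1)) := by
      rw [show 2 * m - 1 + 9 = 4*(2*(q+1)+1) by omega]
    rw [nuC5, sum10, h0, h1, h2, h3, h4, h5, h6, h7, h8, h9, show (m + 2) / 4 = q + 1 by omega]
    simp only [v2_odd, v2_two, v2_four, v2_eight, v2_e8, v2_e16]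
    ring
  · intro hmod
    obtain ⟨q, hq⟩ : ∃ q, m = 4*q+3 := ⟨m / 4, by omega⟩
    have h0 : padicValNat 2 (2 * m - 1 + 0) = padicValNat 2 (2*(4*q+2)+1) := by
      rw [show 2 * m - 1 + 0 = 2*(4*q+2)+1 by omega]
    have h1 : padicValNat 2 (2 * m - 1 + 1) = padicValNat 2 (2*(2*(2*q+1)+1)) := by
      rw [show 2 * m - 1 + 1 = 2*(2*(2*q+1)+1) by omega]
    have h2 : padicValNat 2 (2 * m - 1 + 2) = padicValNat 2 (2*(4*q+3)+1) := by
      rw [show 2 * m - 1 + 2 = 2*(4*q+3)+1 by omega]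
    have h3 : padicValNat 2 (2 * m - 1 + 3) = padicValNat 2 (8*(q+1)) := by
      rw [show 2 * m - 1 + 3 = 8*(q+1) by omega]
    have h4 : padicValNat 2 (2 * m - 1 + 4) = padicValNat 2 (2*(4*q+4)+1) := by
      rw [show 2 * m - 1 + 4 = 2*(4*q+4)+1 by omega]
    have h5 : padicValNat 2 (2 * m - 1 + 5) = padicValNat 2 (2*(2*(2*q+2)+1)) := by
      rw [show 2 * m - 1 + 5 = 2*(2*(2*q+2)+1) by omega]
    have h6 : padicValNat 2 (2 * m - 1 + 6) = padicValNat 2 (2*(4*q+5)+1) := by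
      rw [show 2 * m - 1 + 6 = 2*(4*q+5)+1 by omega]
    have h7 : padicValNat 2 (2 * m - 1 + 7) = padicValNat 2 (4*(2*(q+1)+1)) := by
      rw [show 2 * m - 1 + 7 = 4*(2*(q+1)+1) by omega]
    have h8 : padicValNat 2 (2 * m - 1 + 8) = padicValNat 2 (2*(4*q+6)+1) := by
      rw [show 2 * m - 1 + 8 = 2*(4*q+6)+1 by omega]
    have h9 : padicValNat 2 (2 * m - 1 + 9) = padicValNat 2 (2*(2*(2*q+3)+1)) := by
      rw [show 2 * m - 1 + 9 = 2*(2*(2*q+3)+1) by omega]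
    rw [nuC5, sum10, h0, h1, h2, h3, h4, h5, h6, h7, h8, h9, show (m + 1) / 4 = q + 1 by omega]
    simp only [v2_odd, v2_two, v2_four, v2_eight, v2_e8, v2_e16]
    ring
  · intro hmod
    obtain ⟨q, hq⟩ : ∃ q, m = 4*q+1 := ⟨m / 4, by omega⟩
    have h0 : padicValNat 2 (2 * m - 1 + 0) = padicValNat 2 (2*(4*q)+1) := by
      rw [show 2 * m - 1 + 0 = 2*(4*q)+1 by omega]
    have h1 : padicValNat 2 (2 * m - 1 + 1) = padicValNat 2 (2*(2*(2*q)+1)) := by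
      rw [show 2 * m - 1 + 1 = 2*(2*(2*q)+1) by omega]
    have h2 : padicValNat 2 (2 * m - 1 + 2) = padicValNat 2 (2*(4*q+1)+1) := by
      rw [show 2 * m - 1 + 2 = 2*(4*q+1)+1 by omega]
    have h3 : padicValNat 2 (2 * m - 1 + 3) = padicValNat 2 (4*(2*(q)+1)) := by
      rw [show 2 * m - 1 + 3 = 4*(2*(q)+1) by omega]
    have h4 : padicValNat 2 (2 * m - 1 + 4) = padicValNat 2 (2*(4*q+2)+1) := by
      rw [show 2 * m - 1 + 4 = 2*(4*q+2)+1 by omega]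
    have h5 : padicValNat 2 (2 * m - 1 + 5) = padicValNat 2 (2*(2*(2*q+1)+1)) := by
      rw [show 2 * m - 1 + 5 = 2*(2*(2*q+1)+1) by omega]
    have h6 : padicValNat 2 (2 * m - 1 + 6) = padicValNat 2 (2*(4*q+3)+1) := by
      rw [show 2 * m - 1 + 6 = 2*(4*q+3)+1 by omega]
    have h7 : padicValNat 2 (2 * m - 1 + 7) = padicValNat 2 (8*(q+1)) := by
      rw [show 2 * m - 1 + 7 = 8*(q+1) by omega]
    have h8 : padicValNat 2 (2 * m - 1 + 8) = padicValNat 2 (2*(4*q+4)+1) := by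
      rw [show 2 * m - 1 + 8 = 2*(4*q+4)+1 by omega]
    have h9 : padicValNat 2 (2 * m - 1 + 9) = padicValNat 2 (2*(2*(2*q+2)+1)) := by
      rw [show 2 * m - 1 + 9 = 2*(2*(2*q+2)+1) by omega]
    rw [nuC5, sum10, h0, h1, h2, h3, h4, h5, h6, h7, h8, h9, show (m + 3) / 4 = q + 1 by omega]
    simp only [v2_odd, v2_two, v2_four, v2_eight, v2_e8, v2_e16]
    ring
  · intro hmod
    obtain ⟨q, hq⟩ : ∃ q, m = 8*q+8 := ⟨m / 8 - 1, by omega⟩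
    have h0 : padicValNat 2 (2 * m - 1 + 0) = padicValNat 2 (2*(8*q+7)+1) := by
      rw [show 2 * m - 1 + 0 = 2*(8*q+7)+1 by omega]
    have h1 : padicValNat 2 (2 * m - 1 + 1) = padicValNat 2 (16*(q+1)) := by
      rw [show 2 * m - 1 + 1 = 16*(q+1) by omega]
    have h2 : padicValNat 2 (2 * m - 1 + 2) = padicValNat 2 (2*(8*q+8)+1) := by
      rw [show 2 * m - 1 + 2 = 2*(8*q+8)+1 by omega]
    have h3 : padicValNat 2 (2 * m - 1 + 3) = padicValNat 2 (2*(2*(4*q+4)+1)) := by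
      rw [show 2 * m - 1 + 3 = 2*(2*(4*q+4)+1) by omega]
    have h4 : padicValNat 2 (2 * m - 1 + 4) = padicValNat 2 (2*(8*q+9)+1) := by
      rw [show 2 * m - 1 + 4 = 2*(8*q+9)+1 by omega]
    have h5 : padicValNat 2 (2 * m - 1 + 5) = padicValNat 2 (4*(2*(2*q+2)+1)) := by
      rw [show 2 * m - 1 + 5 = 4*(2*(2*q+2)+1) by omega]
    have h6 : padicValNat 2 (2 * m - 1 + 6) = padicValNat 2 (2*(8*q+10)+1) := by
      rw [show 2 * m - 1 + 6 = 2*(8*q+10)+1 by omega]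
    have h7 : padicValNat 2 (2 * m - 1 + 7) = padicValNat 2 (2*(2*(4*q+5)+1)) := by
      rw [show 2 * m - 1 + 7 = 2*(2*(4*q+5)+1) by omega]
    have h8 : padicValNat 2 (2 * m - 1 + 8) = padicValNat 2 (2*(8*q+11)+1) := by
      rw [show 2 * m - 1 + 8 = 2*(8*q+11)+1 by omega]
    have h9 : padicValNat 2 (2 * m - 1 + 9) = padicValNat 2 (8*(2*(q+1)+1)) := by
      rw [show 2 * m - 1 + 9 = 8*(2*(q+1)+1) by omega]
    rw [nuC5, sum10, h0, h1, h2, h3, h4, h5, h6, h7, h8, h9, show m / 8 = q + 1 by omega]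
    simp only [v2_odd, v2_two, v2_four, v2_eight, v2_e8, v2_e16]
    ring
  · intro hmod
    obtain ⟨q, hq⟩ : ∃ q, m = 8*q+4 := ⟨m / 8, by omega⟩
    have h0 : padicValNat 2 (2 * m - 1 + 0) = padicValNat 2 (2*(8*q+3)+1) := by
      rw [show 2 * m - 1 + 0 = 2*(8*q+3)+1 by omega]
    have h1 : padicValNat 2 (2 * m - 1 + 1) = padicValNat 2 (8*(2*(q)+1)) := by
      rw [show 2 * m - 1 + 1 = 8*(2*(q)+1) by omega]
    have h2 : padicValNat 2 (2 * m - 1 + 2) = padicValNat 2 (2*(8*q+4)+1) := by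
      rw [show 2 * m - 1 + 2 = 2*(8*q+4)+1 by omega]
    have h3 : padicValNat 2 (2 * m - 1 + 3) = padicValNat 2 (2*(2*(4*q+2)+1)) := by
      rw [show 2 * m - 1 + 3 = 2*(2*(4*q+2)+1) by omega]
    have h4 : padicValNat 2 (2 * m - 1 + 4) = padicValNat 2 (2*(8*q+5)+1) := by
      rw [show 2 * m - 1 + 4 = 2*(8*q+5)+1 by omega]
    have h5 : padicValNat 2 (2 * m - 1 + 5) = padicValNat 2 (4*(2*(2*q+1)+1)) := by
      rw [show 2 * m - 1 + 5 = 4*(2*(2*q+1)+1) by omega]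
    have h6 : padicValNat 2 (2 * m - 1 + 6) = padicValNat 2 (2*(8*q+6)+1) := by
      rw [show 2 * m - 1 + 6 = 2*(8*q+6)+1 by omega]
    have h7 : padicValNat 2 (2 * m - 1 + 7) = padicValNat 2 (2*(2*(4*q+3)+1)) := by
      rw [show 2 * m - 1 + 7 = 2*(2*(4*q+3)+1) by omega]
    have h8 : padicValNat 2 (2 * m - 1 + 8) = padicValNat 2 (2*(8*q+7)+1) := by
      rw [show 2 * m - 1 + 8 = 2*(8*q+7)+1 by omega]
    have h9 : padicValNat 2 (2 * m - 1 + 9) = padicValNat 2 (16*(q+1)) := by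
      rw [show 2 * m - 1 + 9 = 16*(q+1) by omega]
    rw [nuC5, sum10, h0, h1, h2, h3, h4, h5, h6, h7, h8, h9, show (m + 4) / 8 = q + 1 by omega]
    simp only [v2_odd, v2_two, v2_four, v2_eight, v2_e8, v2_e16]
    ring
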